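/- The star-controlled GCID system Π = (3, {a, b, A, B}, {a, b}, {AB}, H, 1, {1}, R) with rules r1.1: (1, (λ, a, A)_I, 2), r1.2: (1, (λ, b, A)_I, 3), r1.3: (1, (λ, B, λ)_D, 2), r2.1: (2, (λ, a, B)_I, 1), r2.2: (2, (λ, A, λ)_D, 1), r3.1: (3, (λ, b, B)_I, 1) generates exactly the copy language { ww : w ∈ {a, b}* }; in particular { ww : w ∈ {a, b}* } ∈ GCID_S(3; 1, 0, 1; 1, 0, 0). -/

import Mathlib

/-!
Graph-controlled insertion-deletion (GCID) systems.

Symbols are drawn from the universal symbol set `ℕ`, strings are lists of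
symbols.  A GCID system `Π = (k, V, T, A, H, i0, F, R)` has `k` components;
rules `(i, r, j)` move a string from component `i` to component `j`, where
`r` is an insertion rule `(u, η, v)_I` (rewriting `uv → uηv`) or a deletion
rule `(u, δ, v)_D` (rewriting `uδv → uv`), with `u, v ∈ V*` and `η, δ ∈ V⁺`.
-/

namespace GCIDPaper

/-- Strings over the universal symbol set `ℕ`. -/
abbrev Word : Type := List ℕ

/-- An insertion rule `(u, s, v)_I` (when `isInsertion = true`) or a deletion
rule `(u, s, v)_D` (when `isInsertion = false`), with left context `lctx = u`,
inserted resp. deleted string `core = s`, and right context `rctx = v`. -/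
structure InsDelRule : Type where
  isInsertion : Bool
  lctx : Word
  core : Word
  rctx : Word
  deriving DecidableEq

/-- The insertion rule `(u, η, v)_I`. -/
def insRule (u η v : Word) : InsDelRule := ⟨true, u, η, v⟩

/-- The deletion rule `(u, δ, v)_D`. -/
def delRule (u δ v : Word) : InsDelRule := ⟨false, u, δ, v⟩

/-- Applying a rule to a string: the insertion rule `(u, η, v)_I` corresponds
to the rewriting `uv → uηv`, the deletion rule `(u, δ, v)_D` to `uδv → uv`. -/
def InsDelRule.Applies (r : InsDelRule) (w w' : Word) : Prop :=
  (r.isInsertion = true →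
    ∃ x y, w = x ++ r.lctx ++ r.rctx ++ y ∧
      w' = x ++ r.lctx ++ r.core ++ r.rctx ++ y) ∧
  (r.isInsertion = false →
    ∃ x y, w = x ++ r.lctx ++ r.core ++ r.rctx ++ y ∧
      w' = x ++ r.lctx ++ r.rctx ++ y)

/-- A graph-controlled insertion-deletion system.  The components are
numbered `1, …, k`; `i0` is the initial component, `F` the set of final
components, `axioms` the finite set of axioms (placed in component `i0`),
and `R` the finite set of rules `(i, r, j)`. -/
structure System : Type where
  k : ℕ
  V : Finset ℕ
  T : Finset ℕ
  axioms : Finset Word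
  i0 : ℕ
  F : Finset ℕ
  R : Finset (ℕ × InsDelRule × ℕ)
  k_pos : 1 ≤ k
  T_sub_V : T ⊆ V
  axioms_over_V : ∀ w ∈ axioms, ∀ a ∈ w, a ∈ V
  i0_mem : i0 ∈ Finset.Icc 1 k
  F_sub : F ⊆ Finset.Icc 1 k
  R_wf : ∀ q ∈ R, q.1 ∈ Finset.Icc 1 k ∧ q.2.2 ∈ Finset.Icc 1 k ∧
    q.2.1.core ≠ [] ∧ (∀ a ∈ q.2.1.lctx, a ∈ V) ∧
    (∀ a ∈ q.2.1.core, a ∈ V) ∧ (∀ a ∈ q.2.1.rctx, a ∈ V)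

/-- One derivation step between configurations: `(w)_i ⇒ (w')_j` if some rule
`(i, r, j)` of the system applied to `w` yields `w'`. -/
def Step (S : System) (c c' : Word × ℕ) : Prop :=
  ∃ q ∈ S.R, q.1 = c.2 ∧ q.2.2 = c'.2 ∧ q.2.1.Applies c.1 c'.1

/-- The reflexive-transitive closure `⇒*` of the step relation. -/
def Derives (S : System) : Word × ℕ → Word × ℕ → Prop :=
  Relation.ReflTransGen (Step S)

/-- The language generated:
`L(Π) = { w ∈ T* : (x)_{i0} ⇒* (w)_{i_f} for some axiom x and some i_f ∈ F }`. -/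
def language (S : System) : Set Word :=
  { w | (∀ a ∈ w, a ∈ S.T) ∧
    ∃ x ∈ S.axioms, ∃ f ∈ S.F, Derives S (x, S.i0) (w, f) }

/-- A single rule obeys the size bounds `(n, i', i''; m, j', j'')`. -/
def InsDelRule.SizeLE (r : InsDelRule) (n i' i'' m j' j'' : ℕ) : Prop :=
  (r.isInsertion = true →
    r.core.length ≤ n ∧ r.lctx.length ≤ i' ∧ r.rctx.length ≤ i'') ∧
  (r.isInsertion = false →
    r.core.length ≤ m ∧ r.lctx.length ≤ j' ∧ r.rctx.length ≤ j'')

/-- The system has size `(k; n, i', i''; m, j', j'')`. -/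
def HasSize (S : System) (k n i' i'' m j' j'' : ℕ) : Prop :=
  S.k = k ∧ ∀ q ∈ S.R, q.2.1.SizeLE n i' i'' m j' j''

/-- Star-controlled: the underlying undirected control graph (with an edge
`{Ci, Cj}` whenever there is a rule `(i, r, j)`) has exactly the edge set
`{ {C1, Ci} : 2 ≤ i ≤ k }`; in particular there are no loops. -/
def StarControlled (S : System) : Prop :=
  (∀ q ∈ S.R, ∃ i ∈ Finset.Icc 2 S.k, ({q.1, q.2.2} : Finset ℕ) = {1, i}) ∧
  (∀ i ∈ Finset.Icc 2 S.k, ∃ q ∈ S.R, ({q.1, q.2.2} : Finset ℕ) = {1, i})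

/-- The class `GCID(k; n, i', i''; m, j', j'')` of languages generated by GCID
systems of the given size. -/
def GCIDClass (k n i' i'' m j' j'' : ℕ) : Set (Set Word) :=
  { L | ∃ S : System, HasSize S k n i' i'' m j' j'' ∧ language S = L }

/-- The class `GCID_S(k; n, i', i''; m, j', j'')` of languages generated by
star-controlled GCID systems of the given size. -/
def GCID_S (k n i' i'' m j' j'' : ℕ) : Set (Set Word) :=
  { L | ∃ S : System, StarControlled S ∧ HasSize S k n i' i'' m j' j'' ∧
    language S = L }

/-- The star-controlled GCID system
`Π = (3, {a, b, A, B}, {a, b}, {AB}, H, 1, {1}, R)` (encoded as `a = 0`,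
`b = 1`, `A = 2`, `B = 3`) with rules
`r1.1 : (1, (λ, a, A)_I, 2)`, `r1.2 : (1, (λ, b, A)_I, 3)`,
`r1.3 : (1, (λ, B, λ)_D, 2)`, `r2.1 : (2, (λ, a, B)_I, 1)`,
`r2.2 : (2, (λ, A, λ)_D, 1)`, `r3.1 : (3, (λ, b, B)_I, 1)`. -/
def copySystem : System where
  k := 3
  V := {0, 1, 2, 3}
  T := {0, 1}
  axioms := {[2, 3]}
  i0 := 1
  F := {1}
  R := {(1, insRule [] [0] [2], 2), (1, insRule [] [1] [2], 3),
        (1, delRule [] [3] [], 2), (2, insRule [] [0] [3], 1),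
        (2, delRule [] [2] [], 1), (3, insRule [] [1] [3], 1)}
  k_pos := by decide
  T_sub_V := by decide
  axioms_over_V := by decide
  i0_mem := by decide
  F_sub := by decide
  R_wf := by decide

/-- The copy language `{ ww : w ∈ {a, b}* }`. -/
def copyLang : Set Word :=
  { u | ∃ w : Word, (∀ a ∈ w, a = 0 ∨ a = 1) ∧ u = w ++ w }

/-! ### Auxiliary lemmas -/

/-- Terminal words: words over `{a, b} = {0, 1}`. -/
def Term (u : Word) : Prop := ∀ a ∈ u, a = 0 ∨ a = 1

lemma term_not_mem {u : Word} (hu : Term u) {s : ℕ} (h0 : s ≠ 0) (h1 : s ≠ 1) :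
    s ∉ u := fun hm => by rcases hu s hm with rfl | rfl <;> simp_all

lemma term_append {u v : Word} (hu : Term u) (hv : Term v) : Term (u ++ v) := by
  intro a ha
  rcases List.mem_append.mp ha with h | h
  · exact hu a h
  · exact hv a h

lemma mem_of_split {w x y : Word} {s : ℕ} (h : w = x ++ s :: y) : s ∈ w := by
  subst h; simp

/-- Splitting at a symbol occurring exactly once is unique. -/
lemma unique_split {s : ℕ} : ∀ {x u y v : Word}, s ∉ u → s ∉ v →
    x ++ s :: y = u ++ s :: v → x = u ∧ y = v := by
  intro x
  induction x with
  | nil =>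
    intro u y v hu hv h
    cases u with
    | nil => simpa using h
    | cons b u' =>
      simp only [List.nil_append, List.cons_append, List.cons.injEq] at h
      exact absurd (h.1 ▸ (List.mem_cons_self : b ∈ b :: u')) hu
  | cons a x' ih =>
    intro u y v hu hv h
    cases u with
    | nil =>
      simp only [List.nil_append, List.cons_append, List.cons.injEq] at h
      exact absurd (h.2 ▸ (by simp : s ∈ x' ++ s :: y)) hv
    | cons b u' =>
      simp only [List.cons_append, List.cons.injEq] at h
      obtain ⟨rfl, h2⟩ := h
      obtain ⟨rfl, rfl⟩ := ih (fun hm => hu (List.mem_cons_of_mem _ hm)) hv h2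
      exact ⟨rfl, rfl⟩

/-- The invariant describing all configurations reachable from `([A,B], 1)`. -/
def Inv (c : Word × ℕ) : Prop :=
  ∃ u : Word, Term u ∧
    (c = (u ++ [2] ++ u ++ [3], 1) ∨
     c = (u ++ [0] ++ [2] ++ u ++ [3], 2) ∨
     c = (u ++ [1] ++ [2] ++ u ++ [3], 3) ∨
     c = (u ++ [2] ++ u, 2) ∨
     c = (u ++ [3], 1) ∨
     c = (u, 2) ∨
     c = (u ++ u, 1))

lemma inv_step {c c' : Word × ℕ} (h : Inv c) (hs : Step copySystem c c') :
    Inv c' := by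
  obtain ⟨w, i⟩ := c
  obtain ⟨w', j⟩ := c'
  obtain ⟨u, hu, hc⟩ := h
  obtain ⟨q, hq, hq1, hq2, hA⟩ := hs
  have h2u : (2 : ℕ) ∉ u := term_not_mem hu (by decide) (by decide)
  have h3u : (3 : ℕ) ∉ u := term_not_mem hu (by decide) (by decide)
  simp only [copySystem, Finset.mem_insert, Finset.mem_singleton] at hq
  simp only at hq1 hq2
  rcases hq with rfl | rfl | rfl | rfl | rfl | rfl <;>
    simp only at hq1 hq2 <;> subst hq1 <;> subst hq2
  -- r1.1 : (1, (λ, a, A)_I, 2)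
  · obtain ⟨x, y, hw, hw'⟩ := hA.1 rfl
    simp only [insRule, List.append_assoc, List.nil_append, List.append_nil,
      List.singleton_append, List.cons_append] at hw hw'
    rcases hc with h | h | h | h | h | h | h <;>
        simp only [Prod.mk.injEq] at h <;> try exact absurd h.2 (by omega)
    · obtain ⟨rfl, -⟩ := h
      have key : x ++ (2 : ℕ) :: y = u ++ 2 :: (u ++ [3]) := by
        simpa [List.append_assoc] using hw.symm
      obtain ⟨hx, hy⟩ := unique_split h2u (by simp [h2u]) key
      exact ⟨u, hu, Or.inr (Or.inl (by simp [hw', hx, hy, List.append_assoc]))⟩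
    · obtain ⟨rfl, -⟩ := h
      have := mem_of_split hw; simp [h2u] at this
    · obtain ⟨rfl, -⟩ := h
      have := mem_of_split hw; simp [h2u] at this
  -- r1.2 : (1, (λ, b, A)_I, 3)
  · obtain ⟨x, y, hw, hw'⟩ := hA.1 rfl
    simp only [insRule, List.append_assoc, List.nil_append, List.append_nil,
      List.singleton_append, List.cons_append] at hw hw'
    rcases hc with h | h | h | h | h | h | h <;>
        simp only [Prod.mk.injEq] at h <;> try exact absurd h.2 (by omega)
    · obtain ⟨rfl, -⟩ := h
      have key : x ++ (2 : ℕ) :: y = u ++ 2 :: (u ++ [3]) := by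
        simpa [List.append_assoc] using hw.symm
      obtain ⟨hx, hy⟩ := unique_split h2u (by simp [h2u]) key
      exact ⟨u, hu, Or.inr (Or.inr (Or.inl
        (by simp [hw', hx, hy, List.append_assoc])))⟩
    · obtain ⟨rfl, -⟩ := h
      have := mem_of_split hw; simp [h2u] at this
    · obtain ⟨rfl, -⟩ := h
      have := mem_of_split hw; simp [h2u] at this
  -- r1.3 : (1, (λ, B, λ)_D, 2)
  · obtain ⟨x, y, hw, hw'⟩ := hA.2 rfl
    simp only [delRule, List.append_assoc, List.nil_append, List.append_nil,
      List.singleton_append, List.cons_append] at hw hw'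
    rcases hc with h | h | h | h | h | h | h <;>
        simp only [Prod.mk.injEq] at h <;> try exact absurd h.2 (by omega)
    · obtain ⟨rfl, -⟩ := h
      have key : x ++ (3 : ℕ) :: y = (u ++ 2 :: u) ++ 3 :: [] := by
        simpa [List.append_assoc] using hw.symm
      obtain ⟨hx, hy⟩ := unique_split (by simp [h3u]) (by simp) key
      exact ⟨u, hu, Or.inr (Or.inr (Or.inr (Or.inl
        (by simp [hw', hx, hy, List.append_assoc]))))⟩
    · obtain ⟨rfl, -⟩ := h
      have key : x ++ (3 : ℕ) :: y = u ++ 3 :: [] := by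
        simpa [List.append_assoc] using hw.symm
      obtain ⟨hx, hy⟩ := unique_split h3u (by simp) key
      exact ⟨u, hu, Or.inr (Or.inr (Or.inr (Or.inr (Or.inr (Or.inl
        (by simp [hw', hx, hy]))))))⟩
    · obtain ⟨rfl, -⟩ := h
      have := mem_of_split hw
      simp [h3u] at this
  -- r2.1 : (2, (λ, a, B)_I, 1)
  · obtain ⟨x, y, hw, hw'⟩ := hA.1 rfl
    simp only [insRule, List.append_assoc, List.nil_append, List.append_nil,
      List.singleton_append, List.cons_append] at hw hw'
    rcases hc with h | h | h | h | h | h | h <;>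
        simp only [Prod.mk.injEq] at h <;> try exact absurd h.2 (by omega)
    · obtain ⟨rfl, -⟩ := h
      have key : x ++ (3 : ℕ) :: y = (u ++ 0 :: 2 :: u) ++ 3 :: [] := by
        simpa [List.append_assoc] using hw.symm
      obtain ⟨hx, hy⟩ := unique_split (by simp [h3u]) (by simp) key
      refine ⟨u ++ [0], term_append hu (by intro a ha; simp at ha; omega),
        Or.inl ?_⟩
      simp [hw', hx, hy, List.append_assoc]
    · obtain ⟨rfl, -⟩ := h
      have := mem_of_split hw
      simp [h3u] at this
    · obtain ⟨rfl, -⟩ := h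
      have := mem_of_split hw; exact absurd this h3u
  -- r2.2 : (2, (λ, A, λ)_D, 1)
  · obtain ⟨x, y, hw, hw'⟩ := hA.2 rfl
    simp only [delRule, List.append_assoc, List.nil_append, List.append_nil,
      List.singleton_append, List.cons_append] at hw hw'
    rcases hc with h | h | h | h | h | h | h <;>
        simp only [Prod.mk.injEq] at h <;> try exact absurd h.2 (by omega)
    · obtain ⟨rfl, -⟩ := h
      have key : x ++ (2 : ℕ) :: y = (u ++ [0]) ++ 2 :: (u ++ [3]) := by
        simpa [List.append_assoc] using hw.symm
      obtain ⟨hx, hy⟩ := unique_split (by simp [h2u]) (by simp [h2u]) key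
      refine ⟨u ++ 0 :: u, term_append hu (by
        intro a ha; rcases List.mem_cons.mp ha with rfl | h'
        · left; rfl
        · exact hu a h'), Or.inr (Or.inr (Or.inr (Or.inr (Or.inl ?_))))⟩
      simp [hw', hx, hy, List.append_assoc]
    · obtain ⟨rfl, -⟩ := h
      have key : x ++ (2 : ℕ) :: y = u ++ 2 :: u := by
        simpa [List.append_assoc] using hw.symm
      obtain ⟨hx, hy⟩ := unique_split h2u h2u key
      exact ⟨u, hu, Or.inr (Or.inr (Or.inr (Or.inr (Or.inr (Or.inr
        (by simp [hw', hx, hy]))))))⟩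
    · obtain ⟨rfl, -⟩ := h
      have := mem_of_split hw; exact absurd this h2u
  -- r3.1 : (3, (λ, b, B)_I, 1)
  · obtain ⟨x, y, hw, hw'⟩ := hA.1 rfl
    simp only [insRule, List.append_assoc, List.nil_append, List.append_nil,
      List.singleton_append, List.cons_append] at hw hw'
    rcases hc with h | h | h | h | h | h | h <;>
        simp only [Prod.mk.injEq] at h <;> try exact absurd h.2 (by omega)
    obtain ⟨rfl, -⟩ := h
    have key : x ++ (3 : ℕ) :: y = (u ++ 1 :: 2 :: u) ++ 3 :: [] := by
      simpa [List.append_assoc] using hw.symm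
    obtain ⟨hx, hy⟩ := unique_split (by simp [h3u]) (by simp) key
    refine ⟨u ++ [1], term_append hu (by intro a ha; simp at ha; omega),
      Or.inl ?_⟩
    simp [hw', hx, hy, List.append_assoc]

lemma inv_derives {c c' : Word × ℕ} (h : Inv c)
    (hd : Derives copySystem c c') : Inv c' := by
  induction hd with
  | refl => exact h
  | tail _ hstep ih => exact inv_step ih hstep

/-- The main loop: we can derive `(w A w B, 1)` for every terminal `w`. -/
lemma derive_loop {u : Word} (hu : Term u) :
    Derives copySystem ([2, 3], 1) (u ++ [2] ++ u ++ [3], 1) := by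
  induction u using List.reverseRecOn with
  | nil => exact Relation.ReflTransGen.refl
  | append_singleton v c ih =>
    have hv : Term v := fun a ha => hu a (by simp [ha])
    rcases hu c (by simp) with rfl | rfl
    · have s1 : Step copySystem (v ++ [2] ++ v ++ [3], 1)
          (v ++ [0] ++ [2] ++ v ++ [3], 2) :=
        ⟨(1, insRule [] [0] [2], 2), by simp [copySystem], rfl, rfl,
          fun _ => ⟨v, v ++ [3], by simp [insRule], by simp [insRule]⟩,
          fun h => by simp [insRule] at h⟩
      have s2 : Step copySystem (v ++ [0] ++ [2] ++ v ++ [3], 2)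
          ((v ++ [0]) ++ [2] ++ (v ++ [0]) ++ [3], 1) :=
        ⟨(2, insRule [] [0] [3], 1), by simp [copySystem], rfl, rfl,
          fun _ => ⟨v ++ [0] ++ [2] ++ v, [], by simp [insRule],
            by simp [insRule]⟩,
          fun h => by simp [insRule] at h⟩
      exact ((ih hv).tail s1).tail s2
    · have s1 : Step copySystem (v ++ [2] ++ v ++ [3], 1)
          (v ++ [1] ++ [2] ++ v ++ [3], 3) :=
        ⟨(1, insRule [] [1] [2], 3), by simp [copySystem], rfl, rfl,
          fun _ => ⟨v, v ++ [3], by simp [insRule], by simp [insRule]⟩,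
          fun h => by simp [insRule] at h⟩
      have s2 : Step copySystem (v ++ [1] ++ [2] ++ v ++ [3], 3)
          ((v ++ [1]) ++ [2] ++ (v ++ [1]) ++ [3], 1) :=
        ⟨(3, insRule [] [1] [3], 1), by simp [copySystem], rfl, rfl,
          fun _ => ⟨v ++ [1] ++ [2] ++ v, [], by simp [insRule],
            by simp [insRule]⟩,
          fun h => by simp [insRule] at h⟩
      exact ((ih hv).tail s1).tail s2

lemma derive_full {u : Word} (hu : Term u) :
    Derives copySystem ([2, 3], 1) (u ++ u, 1) := by
  have s1 : Step copySystem (u ++ [2] ++ u ++ [3], 1) (u ++ [2] ++ u, 2) :=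
    ⟨(1, delRule [] [3] [], 2), by simp [copySystem], rfl, rfl,
      fun h => by simp [delRule] at h,
      fun _ => ⟨u ++ [2] ++ u, [], by simp [delRule], by simp [delRule]⟩⟩
  have s2 : Step copySystem (u ++ [2] ++ u, 2) (u ++ u, 1) :=
    ⟨(2, delRule [] [2] [], 1), by simp [copySystem], rfl, rfl,
      fun h => by simp [delRule] at h,
      fun _ => ⟨u, u, by simp [delRule], by simp [delRule]⟩⟩
  exact (((derive_loop hu).tail s1)).tail s2

lemma copySystem_lang : language copySystem = copyLang := by
  ext w
  constructor
  · rintro ⟨hT, x, hx, f, hf, hd⟩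
    simp only [copySystem, Finset.mem_singleton] at hx hf
    subst hx; subst hf
    have hd' : Derives copySystem ([2, 3], 1) (w, 1) := hd
    have hInv : Inv (w, 1) := inv_derives ⟨[], by intro a ha; simp at ha,
      Or.inl (by simp)⟩ hd'
    have hT' : ∀ a ∈ w, a = 0 ∨ a = 1 := by
      intro a ha
      have := hT a ha
      simp only [copySystem, Finset.mem_insert, Finset.mem_singleton] at this
      exact this
    obtain ⟨u, hu, hc⟩ := hInv
    rcases hc with h | h | h | h | h | h | h <;>
        simp only [Prod.mk.injEq] at h <;> try exact absurd h.2 (by omega)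
    · obtain ⟨rfl, -⟩ := h
      have : (2 : ℕ) ∈ u ++ [2] ++ u ++ [3] := by simp
      rcases hT' 2 this with h' | h' <;> simp at h'
    · obtain ⟨rfl, -⟩ := h
      have : (3 : ℕ) ∈ u ++ [3] := by simp
      rcases hT' 3 this with h' | h' <;> simp at h'
    · exact ⟨u, hu, h.1⟩
  · rintro ⟨u, hu, rfl⟩
    refine ⟨?_, [2, 3], by simp [copySystem], 1, by simp [copySystem],
      derive_full hu⟩
    intro a ha
    rcases term_append hu hu a ha with rfl | rfl <;> simp [copySystem]

/-- The system `copySystem` is star-controlled, generates exactly the copy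
language `{ ww : w ∈ {a, b}* }`, and in particular the copy language belongs
to `GCID_S(3; 1, 0, 1; 1, 0, 0)`. -/
theorem copySystem_generates_copyLang :
    StarControlled copySystem ∧ language copySystem = copyLang ∧
      copyLang ∈ GCID_S 3 1 0 1 1 0 0 := by
  have hstar : StarControlled copySystem := by
    constructor <;> decide
  have hsize : HasSize copySystem 3 1 0 1 1 0 0 := by
    refine ⟨rfl, ?_⟩
    intro q hq
    simp only [copySystem, Finset.mem_insert, Finset.mem_singleton] at hq
    rcases hq with rfl | rfl | rfl | rfl | rfl | rfl <;>
      exact ⟨fun h => by simp_all [insRule, delRule, InsDelRule.SizeLE],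
        fun h => by simp_all [insRule, delRule, InsDelRule.SizeLE]⟩
  exact ⟨hstar, copySystem_lang, copySystem, hstar, hsize, copySystem_lang⟩

end GCIDPaper
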